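/- For every finite set E with a symmetric irreflexive relation I ⊆ E×E, there exists a labelled Petri net (N,λ,L) with event set T = E, label set L = E, and λ the identity map, such that the simplicial scheme associated to the labelled asynchronous system (A(N),λ,L) has vertex set equal to E and its simplices are exactly the nonempty finite subsets {e₁,…,e_k} ⊆ E whose elements are pairwise independent, i.e. (e_i,e_j) ∈ I for all i ≠ j (the clique complex of (E,I)). In particular, in this Petri net, for every nonempty set {e_{i₀},…,e_{i_n}} of mutually I-independent events the sequence e_{i₀}⋯e_{i_n} is firable from the initial marking M₀. -/
import Mathlib


/-- The independence relation of the asynchronous system of a Petri net: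
two events are independent when the scalar product
`(pre e₁ + post e₁) · (pre e₂ + post e₂)` is zero. -/
def PetriIndep {P T : Type} [Fintype P] (pre post : T → P → ℕ) (e₁ e₂ : T) : Prop :=
  ∑ p : P, (pre e₁ p + post e₁ p) * (pre e₂ p + post e₂ p) = 0

/-- The transition relation of the asynchronous system of a Petri net:
`(M, e, M') ∈ Tran` iff `M ≥ pre e` and `M' = M - pre e + post e`. -/
def PetriTran {P T : Type} (pre post : T → P → ℕ) (M : P → ℕ) (e : T) (M' : P → ℕ) : Prop :=
  (∀ p, pre e p ≤ M p) ∧ ∀ p, M' p = M p - pre e p + post e p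

/-- Iterated execution of a word of events from a state: `ExecRel tran s w t`
means `s · w = t`. -/
def ExecRel {S E : Type} (tran : S → E → S → Prop) : S → List E → S → Prop
  | s, [], t => s = t
  | s, e :: w, t => ∃ u, tran s e u ∧ ExecRel tran u w t

/-- A marking is reachable if it is obtained from the initial marking `M₀` by a
finite sequence of transitions. -/
def PetriReachable {P T : Type} (pre post : T → P → ℕ) (M₀ M : P → ℕ) : Prop :=
  Relation.ReflTransGen (fun M M' => ∃ e, PetriTran pre post M e M') M₀ M

/-- for every finite set `E` with a symmetric irreflexive relation `I`,
there is a labelled Petri net with event set `E`, label set `E` and identity label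
function (so its places form a finite set `Fin m`) such that the associated simplicial
scheme has vertex set `E` and its simplices are exactly the nonempty subsets of `E`
of pairwise `I`-independent elements (the clique complex of `(E, I)`); moreover every
sequence of pairwise `I`-independent events is firable from the initial marking `M₀`. -/
theorem petri_net_clique_complex {E : Type} [Fintype E]
    (I : E → E → Prop) (hsymm : ∀ a b, I a b → I b a) (hirr : ∀ a, ¬ I a a) :
    ∃ (m : ℕ) (pre post : E → Fin m → ℕ) (M₀ : Fin m → ℕ),
      -- the vertex set λ⁺E of the associated simplicial scheme is all of E
      ({l : E | ∃ (M u : Fin m → ℕ), PetriReachable pre post M₀ M ∧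
          PetriTran pre post M l u} = Set.univ) ∧
      -- the simplices of the associated simplicial scheme are exactly the cliques of (E, I)
      ({X : Set E | ∃ (k : ℕ) (a : Fin (k + 1) → E) (M : Fin m → ℕ),
          PetriReachable pre post M₀ M ∧
          (∀ i j, i < j → PetriIndep pre post (a i) (a j)) ∧
          (∃ M', ExecRel (PetriTran pre post) M (List.ofFn a) M') ∧
          X = Set.range a} =
        {X : Set E | X.Nonempty ∧ ∀ a ∈ X, ∀ b ∈ X, a ≠ b → I a b}) ∧
      -- every nonempty sequence of mutually I-independent events is firable from M₀
      (∀ l : List E, l ≠ [] → l.Pairwise I →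
        ∃ M : Fin m → ℕ, ExecRel (PetriTran pre post) M₀ l M) := by
  classical
  set m := Fintype.card (E × E) with hm
  set σ : Fin m ≃ E × E := (Fintype.equivFin (E × E)).symm with hσ
  set C : E → Fin m → Prop :=
    fun e p => (e = (σ p).1 ∨ e = (σ p).2) ∧ ¬ I (σ p).1 (σ p).2 with hC
  set pre : E → Fin m → ℕ := fun e p => if C e p then 1 else 0 with hpre
  set M₀ : Fin m → ℕ := fun _ => 1 with hM₀
  have htran : ∀ e, PetriTran pre pre M₀ e M₀ := by
    intro e
    constructor
    · intro p; simp only [hpre]; split <;> simp [hM₀]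
    · intro p; simp only [hpre, hM₀]; split <;> simp
  have hexec : ∀ l : List E, ExecRel (PetriTran pre pre) M₀ l M₀ := by
    intro l
    induction l with
    | nil => rfl
    | cons e w ih => exact ⟨M₀, htran e, ih⟩
  have hindep : ∀ e₁ e₂, PetriIndep pre pre e₁ e₂ ↔ e₁ ≠ e₂ ∧ I e₁ e₂ := by
    intro e₁ e₂
    unfold PetriIndep
    rw [Finset.sum_eq_zero_iff]
    constructor
    · intro h
      have key : ∀ a b : E, ¬ (C e₁ (σ.symm (a, b)) ∧ C e₂ (σ.symm (a, b))) := by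
        intro a b ⟨h1, h2⟩
        have := h (σ.symm (a, b)) (Finset.mem_univ _)
        simp only [hpre] at this
        rw [if_pos h1, if_pos h2] at this
        omega
      constructor
      · rintro rfl
        exact key e₁ e₁ (by simp [hC, hirr])
      · by_contra hni
        exact key e₁ e₂ (by simp [hC, hni])
    · rintro ⟨hne, hI⟩ p _
      have : ¬ (C e₁ p ∧ C e₂ p) := by
        rintro ⟨⟨h1, hn⟩, ⟨h2, -⟩⟩
        rcases h1 with rfl | rfl <;> rcases h2 with h2 | h2 <;>
          first
          | exact hne h2.symm
          | exact hn (h2 ▸ hI)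
          | exact hn (h2 ▸ hsymm _ _ hI)
      simp only [hpre]
      by_cases h1 : C e₁ p
      · rw [if_pos h1, if_neg (fun h2 => this ⟨h1, h2⟩)]; ring
      · rw [if_neg h1]; ring
  refine ⟨m, pre, pre, M₀, ?_, ?_, ?_⟩
  · ext e
    simp only [Set.mem_setOf_eq, Set.mem_univ, iff_true]
    exact ⟨M₀, M₀, Relation.ReflTransGen.refl, htran e⟩
  · ext X
    simp only [Set.mem_setOf_eq]
    constructor
    · rintro ⟨k, a, M, -, hpair, -, rfl⟩
      refine ⟨⟨a 0, Set.mem_range_self 0⟩, ?_⟩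
      rintro x ⟨i, rfl⟩ y ⟨j, rfl⟩ hne
      rcases lt_or_gt_of_ne (show i ≠ j from fun h => hne (by rw [h])) with h | h
      · exact ((hindep _ _).mp (hpair i j h)).2
      · exact hsymm _ _ ((hindep _ _).mp (hpair j i h)).2
    · rintro ⟨hne, hpair⟩
      have hfin : Fintype X := Fintype.ofFinite X
      have : Nonempty X := hne.to_subtype
      have hn0 : Fintype.card X ≠ 0 := Fintype.card_ne_zero
      obtain ⟨k, hk⟩ : ∃ k, Fintype.card X = k + 1 :=
        ⟨Fintype.card X - 1, by omega⟩
      set e : Fin (Fintype.card X) ≃ X := (Fintype.equivFin X).symm with he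
      set a : Fin (k + 1) → E := fun i => (e ⟨i.1, by omega⟩ : E) with ha
      have hmem : ∀ i, a i ∈ X := fun i => (e ⟨i.1, by omega⟩).2
      have hainj : ∀ i j : Fin (k + 1), a i = a j → i = j := by
        intro i j hij
        have : (⟨i.1, by omega⟩ : Fin (Fintype.card X)) = ⟨j.1, by omega⟩ :=
          e.injective (Subtype.ext hij)
        exact Fin.ext (by simpa using congrArg Fin.val this)
      refine ⟨k, a, M₀, Relation.ReflTransGen.refl, ?_, ⟨M₀, hexec _⟩, ?_⟩
      · intro i j hij
        refine (hindep _ _).mpr ⟨fun h => absurd (hainj i j h) (Fin.ne_of_lt hij), ?_⟩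
        exact hpair _ (hmem i) _ (hmem j) (fun h => absurd (hainj i j h) (Fin.ne_of_lt hij))
      · ext x
        constructor
        · intro hx
          have hj := (e.symm ⟨x, hx⟩).2
          refine ⟨⟨(e.symm ⟨x, hx⟩).1, by omega⟩, ?_⟩
          show ((e ⟨(e.symm ⟨x, hx⟩).1, _⟩ : X) : E) = x
          have h2 : (⟨(e.symm ⟨x, hx⟩).1, by omega⟩ : Fin (Fintype.card X)) = e.symm ⟨x, hx⟩ :=
            Fin.ext rfl
          rw [h2, Equiv.apply_symm_apply]
        · rintro ⟨i, rfl⟩; exact hmem i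
  · intro l _ _
    exact ⟨M₀, hexec l⟩
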